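/- In the abstract critical-map setup, for every vertex x and every complex number λ with |λ| < 2/δ, the series Σ_{k=0}^∞ λ^k · P k x / k! is absolutely convergent (the function k ↦ ‖λ^k · P k x / k!‖ is summable). -/

import Mathlib

open Complex

theorem discrete_exponential_series_absolutely_convergent
    {V : Type*} (G : SimpleGraph V) (hG : G.Connected)
    (O : V) (δ : ℝ) (hδ : 0 < δ)
    (Z : V → ℂ) (hZO : Z O = 0)
    (hZ : ∀ x y : V, G.Adj x y → ‖Z y - Z x‖ = δ)
    (P : ℕ → V → ℂ)
    (hP0 : ∀ v : V, P 0 v = 1)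
    (hPO : ∀ k : ℕ, 1 ≤ k → P k O = 0)
    (hPrec : ∀ k : ℕ, 1 ≤ k → ∀ x y : V, G.Adj x y →
      P k y = P k x + (k : ℂ) * (P (k - 1) x + P (k - 1) y) * (Z y - Z x) / 2)
    (x : V) (lam : ℂ) (hlam : ‖lam‖ < 2 / δ) :
    Summable (fun k : ℕ => ‖lam ^ k * P k x / (Nat.factorial k : ℂ)‖) := by
  set c : ℝ := δ / 2 with hc
  have hc0 : 0 < c := by positivity
  set A : ℕ → ℕ → ℝ := fun n k => 3 ^ n * ((k : ℝ) + 1) ^ n * (k.factorial : ℝ) * c ^ k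
    with hA
  -- transfer of the bound along an edge
  have step : ∀ u v : V, G.Adj u v → ∀ n : ℕ,
      (∀ k, ‖P k u‖ ≤ A n k) → ∀ k, ‖P k v‖ ≤ A (n + 1) k := by
    intro u v huv n hu k
    induction k with
    | zero =>
      simp only [hP0, norm_one, hA]
      have h3 : (1 : ℝ) ≤ 3 ^ (n + 1) := one_le_pow₀ (by norm_num)
      norm_num
      linarith
    | succ k ih =>
      have hrec := hPrec (k + 1) (by omega) u v huv
      simp only [Nat.add_sub_cancel] at hrec
      have habs : ‖P (k + 1) v‖ ≤
          ‖P (k + 1) u‖ +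
            ((k : ℝ) + 1) * (‖P k u‖ + ‖P k v‖) * c := by
        rw [hrec]
        have h1 : ‖P (k + 1) u + ((k : ℕ) + 1 : ℂ) * (P k u + P k v) * (Z v - Z u) / 2‖
            ≤ ‖P (k + 1) u‖ +
              ‖((k : ℕ) + 1 : ℂ) * (P k u + P k v) * (Z v - Z u) / 2‖ := by
          push_cast
          exact norm_add_le _ _
        refine le_trans (by push_cast at h1 ⊢; exact h1) ?_
        have h2 : ‖((k : ℕ) + 1 : ℂ) * (P k u + P k v) * (Z v - Z u) / 2‖
            = ((k : ℝ) + 1) * ‖P k u + P k v‖ * δ / 2 := by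
          rw [norm_div, norm_mul, norm_mul, hZ u v huv,
            show ((k : ℂ) + 1) = ((k + 1 : ℕ) : ℂ) by push_cast; ring, Complex.norm_natCast]
          push_cast
          norm_num
        push_cast at h2
        rw [h2]
        have h3 : ‖P k u + P k v‖ ≤ ‖P k u‖ + ‖P k v‖ :=
          norm_add_le _ _
        have hk1 : (0 : ℝ) ≤ (k : ℝ) + 1 := by positivity
        rw [hc]
        have := mul_le_mul_of_nonneg_left h3 hk1
        nlinarith [hδ]
      refine habs.trans ?_
      have hu1 := hu (k + 1)
      have hu0 := hu k
      -- key combinatorial inequality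
      have hkey : ((k : ℝ) + 2) ^ n + ((k : ℝ) + 1) ^ n + 3 * ((k : ℝ) + 1) ^ (n + 1)
          ≤ 3 * ((k : ℝ) + 2) ^ (n + 1) := by
        have h1 : ((k : ℝ) + 1) ^ n ≤ ((k : ℝ) + 2) ^ n :=
          pow_le_pow_left₀ (by positivity) (by linarith) n
        have h2 : ((k : ℝ) + 1) ^ (n + 1) = ((k : ℝ) + 1) * ((k : ℝ) + 1) ^ n := by ring
        have h3 : ((k : ℝ) + 2) ^ (n + 1) = ((k : ℝ) + 2) * ((k : ℝ) + 2) ^ n := by ring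
        have h4 : (0 : ℝ) ≤ ((k : ℝ) + 2) ^ n := by positivity
        nlinarith [h1, h4, mul_le_mul_of_nonneg_left h1 (by positivity : (0:ℝ) ≤ (k:ℝ) + 1)]
      have hF : (0 : ℝ) < (k.factorial : ℝ) * c ^ k := by positivity
      simp only [hA] at hu1 hu0 ih ⊢
      have hfac : ((k + 1).factorial : ℝ) = ((k : ℝ) + 1) * (k.factorial : ℝ) := by
        rw [Nat.factorial_succ]; push_cast; ring
      push_cast at hu1 hu0 ih ⊢
      rw [hfac] at hu1 ⊢
      have hcpow : c ^ (k + 1) = c * c ^ k := by ring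
      rw [hcpow] at hu1 ⊢
      rw [show ((k : ℝ) + 1 + 1) = (k : ℝ) + 2 from by ring] at hu1 ⊢
      have hD : (0 : ℝ) ≤ 3 ^ n * (((k : ℝ) + 1) * (k.factorial : ℝ)) * (c * c ^ k) := by
        positivity
      have hmul := mul_le_mul_of_nonneg_left hkey hD
      have H1 := mul_le_mul_of_nonneg_left hu0
        (by positivity : (0 : ℝ) ≤ ((k : ℝ) + 1) * c)
      have H2 := mul_le_mul_of_nonneg_left ih
        (by positivity : (0 : ℝ) ≤ ((k : ℝ) + 1) * c)
      simp only [pow_succ] at hmul H2 ⊢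
      nlinarith [hu1, hmul, H1, H2]
  -- bound at every vertex by induction along a walk from O
  have walk : ∀ u v : V, G.Walk u v →
      (∃ n, ∀ k, ‖P k u‖ ≤ A n k) → ∃ n, ∀ k, ‖P k v‖ ≤ A n k := by
    intro u v w
    induction w with
    | nil => exact id
    | cons h p ih =>
      rintro ⟨n, hn⟩
      exact ih ⟨n + 1, step _ _ h n hn⟩
  have hbase : ∃ n, ∀ k, ‖P k O‖ ≤ A n k := by
    refine ⟨0, fun k => ?_⟩
    cases k with
    | zero => simp [hP0, hA]
    | succ k =>
      rw [hPO (k + 1) (by omega)]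
      simp only [hA, norm_zero]
      positivity
  obtain ⟨n, hn⟩ := walk O x ((hG.preconnected O x).some) hbase
  -- now summability
  set r : ℝ := ‖lam‖ * c with hrdef
  have hr0 : 0 ≤ r := by positivity
  have hr1 : r < 1 := by
    have h1 : ‖lam‖ * δ < 2 := (lt_div_iff₀ hδ).mp hlam
    rw [hrdef, hc]
    linarith
  set ρ : ℝ := (r + 1) / 2 with hρdef
  have hρ0 : 0 < ρ := by rw [hρdef]; linarith
  have hρ1 : ρ < 1 := by rw [hρdef]; linarith
  have hrρ : r ≤ ρ := by rw [hρdef]; linarith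
  have hsum : Summable (fun k : ℕ => (3 : ℝ) ^ n * ((k : ℝ) + 1) ^ n * ρ ^ k) := by
    have h := summable_pow_mul_geometric_of_norm_lt_one (R := ℝ) n
      (by rw [Real.norm_eq_abs, abs_of_pos hρ0]; exact hρ1)
    have h2 := (summable_nat_add_iff 1).mpr h
    have h3 := h2.mul_left ((3 : ℝ) ^ n / ρ)
    refine h3.congr fun k => ?_
    push_cast
    field_simp
    ring
  refine Summable.of_nonneg_of_le (fun k => norm_nonneg _) (fun k => ?_) hsum
  have hnk := hn k
  have hfacpos : (0 : ℝ) < (k.factorial : ℝ) := by positivity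
  have hnorm : ‖lam ^ k * P k x / (k.factorial : ℂ)‖
      = ‖lam‖ ^ k * ‖P k x‖ / (k.factorial : ℝ) := by
    rw [norm_div, norm_mul, norm_pow, Complex.norm_natCast]
  rw [hnorm]
  have h1 : ‖lam‖ ^ k * ‖P k x‖ / (k.factorial : ℝ)
      ≤ ‖lam‖ ^ k * A n k / (k.factorial : ℝ) := by
    gcongr
  refine h1.trans ?_
  have heq : ‖lam‖ ^ k * A n k / (k.factorial : ℝ)
      = 3 ^ n * ((k : ℝ) + 1) ^ n * r ^ k := by
    simp only [hA]
    rw [hrdef, mul_pow]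
    field_simp
  rw [heq]
  have hle : r ^ k ≤ ρ ^ k := pow_le_pow_left₀ hr0 hrρ k
  exact mul_le_mul_of_nonneg_left hle (by positivity)
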